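/- Let m ≥ 2 be an integer and let n > 10 be an integer with n ≡ 2 (mod 4). Then (1 + α(m))·(n!/2)^{m/2} ≤ (1/2^{m−1})·((n/2 − 1)!)²·((n/2)!)^{2m−2}, as an inequality of real numbers. -/

import Mathlib

/-- `alpha m` = α(m): the number of distinct prime divisors of `m`. -/
def alpha (m : ℕ) : ℕ := m.primeFactors.card

lemma fact_big (k : ℕ) (hk : 7 ≤ k) : 2 * k ^ 2 * 16 ^ k ≤ Nat.factorial (2 * k) := by
  induction k, hk using Nat.le_induction with
  | base => norm_num [Nat.factorial]
  | succ k hk ih =>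
    have h1 : 2 * (k + 1) = 2 * k + 1 + 1 := by ring
    rw [h1, Nat.factorial_succ, Nat.factorial_succ]
    have h2 : 32 * (k + 1) ^ 2 ≤ (2 * k + 1 + 1) * ((2 * k + 1) * (2 * k ^ 2)) := by
      nlinarith
    calc 2 * (k + 1) ^ 2 * 16 ^ (k + 1)
        = (32 * (k + 1) ^ 2) * 16 ^ k := by ring
      _ ≤ ((2 * k + 1 + 1) * ((2 * k + 1) * (2 * k ^ 2))) * 16 ^ k :=
          Nat.mul_le_mul_right _ h2
      _ = (2 * k + 1 + 1) * ((2 * k + 1) * (2 * k ^ 2 * 16 ^ k)) := by ring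
      _ ≤ (2 * k + 1 + 1) * ((2 * k + 1) * Nat.factorial (2 * k)) := by
          exact Nat.mul_le_mul_left _ (Nat.mul_le_mul_left _ ih)

lemma central_bound (k : ℕ) : Nat.factorial (2 * k) ≤ 4 ^ k * Nat.factorial k ^ 2 := by
  have hkk : k ≤ 2 * k := by omega
  have h1 : Nat.choose (2 * k) k * Nat.factorial k * Nat.factorial (2 * k - k)
      = Nat.factorial (2 * k) := Nat.choose_mul_factorial_mul_factorial hkk
  have h2 : Nat.choose (2 * k) k ≤ 4 ^ k := by
    have hmem : k ∈ Finset.range (2 * k + 1) := by simp; omega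
    have := Finset.single_le_sum (f := fun i => Nat.choose (2 * k) i)
      (fun i _ => Nat.zero_le _) hmem
    calc Nat.choose (2 * k) k ≤ ∑ i ∈ Finset.range (2 * k + 1), Nat.choose (2 * k) i := this
      _ = 2 ^ (2 * k) := Nat.sum_range_choose (2 * k)
      _ = 4 ^ k := by rw [pow_mul]; norm_num
  have h3 : 2 * k - k = k := by omega
  rw [h3] at h1
  calc Nat.factorial (2 * k) = Nat.choose (2 * k) k * Nat.factorial k * Nat.factorial k := h1.symm
    _ ≤ 4 ^ k * Nat.factorial k * Nat.factorial k := by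
        exact Nat.mul_le_mul_right _ (Nat.mul_le_mul_right _ h2)
    _ = 4 ^ k * Nat.factorial k ^ 2 := by ring

lemma key_nat (k : ℕ) (hk : 7 ≤ k) :
    2 * k ^ 2 * Nat.factorial (2 * k) ≤ Nat.factorial k ^ 4 := by
  have h1 := fact_big k hk
  have h2 := central_bound k
  have h3 : 16 ^ k * (2 * k ^ 2 * Nat.factorial (2 * k))
      ≤ 16 ^ k * Nat.factorial k ^ 4 := by
    calc 16 ^ k * (2 * k ^ 2 * Nat.factorial (2 * k))
        = (2 * k ^ 2 * 16 ^ k) * Nat.factorial (2 * k) := by ring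
      _ ≤ Nat.factorial (2 * k) * Nat.factorial (2 * k) := Nat.mul_le_mul_right _ h1
      _ ≤ (4 ^ k * Nat.factorial k ^ 2) * (4 ^ k * Nat.factorial k ^ 2) :=
          Nat.mul_le_mul h2 h2
      _ = 16 ^ k * Nat.factorial k ^ 4 := by
          rw [show (16 : ℕ) = 4 * 4 by norm_num, mul_pow]; ring
  exact Nat.le_of_mul_le_mul_left h3 (by positivity)

lemma alpha_le (m : ℕ) (hm : 2 ≤ m) : 1 + alpha m ≤ m := by
  have h1 : 2 ^ alpha m ≤ m := by
    calc 2 ^ alpha m ≤ ∏ p ∈ m.primeFactors, p :=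
          Finset.pow_card_le_prod _ _ _ (fun p hp => (Nat.prime_of_mem_primeFactors hp).two_le)
      _ ≤ m := Nat.le_of_dvd (by omega) (Nat.prod_primeFactors_dvd m)
  have h2 : alpha m < 2 ^ alpha m := Nat.lt_two_pow_self
  omega

/-- **Lemma 11 (3).** For `m ≥ 2` and `n > 10` with `n ≡ 2 (mod 4)`,
`(1 + α(m))·(n!/2)^(m/2) ≤ (1/2^(m-1))·((n/2-1)!)²·((n/2)!)^(2m-2)`
(over the reals, the exponent `m/2` being a real exponent). -/
theorem diagonal_bound_two_mod_four (m : ℕ) (hm : 2 ≤ m) (n : ℕ) (hn : 10 < n)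
    (hn4 : n % 4 = 2) :
    (1 + (alpha m : ℝ)) * ((Nat.factorial n : ℝ) / 2) ^ ((m : ℝ) / 2) ≤
      (1 / (2 : ℝ) ^ (m - 1)) * (Nat.factorial (n / 2 - 1) : ℝ) ^ 2 *
        (Nat.factorial (n / 2) : ℝ) ^ (2 * m - 2) := by
  set k := n / 2 with hkdef
  have hn2 : n = 2 * k := by omega
  have hk : 7 ≤ k := by omega
  have hkey : (2 * k ^ 2 * Nat.factorial (2 * k) : ℝ) ≤ (Nat.factorial k : ℝ) ^ 4 := by
    exact_mod_cast key_nat k hk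
  set b : ℝ := Real.sqrt ((Nat.factorial n : ℝ) / 2) with hbdef
  have hnf : (0 : ℝ) < (Nat.factorial n : ℝ) := by exact_mod_cast (Nat.factorial_pos n)
  have hb0 : 0 < b := Real.sqrt_pos.mpr (by positivity)
  have hb2 : b ^ 2 = (Nat.factorial n : ℝ) / 2 := Real.sq_sqrt (by positivity)
  set F : ℝ := (Nat.factorial k : ℝ) with hFdef
  have hF0 : 0 < F := by rw [hFdef]; exact_mod_cast (Nat.factorial_pos k)
  -- rewrite LHS power
  have hrw : ((Nat.factorial n : ℝ) / 2) ^ ((m : ℝ) / 2) = b ^ m := by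
    rw [hbdef, Real.sqrt_eq_rpow, ← Real.rpow_natCast (((Nat.factorial n : ℝ) / 2) ^ ((1:ℝ)/2)) m,
      ← Real.rpow_mul (by positivity)]
    ring_nf
  -- key : 2 k b ≤ F ^ 2
  have hkb : 2 * (k : ℝ) * b ≤ F ^ 2 := by
    have hsq : (2 * (k : ℝ) * b) ^ 2 ≤ (F ^ 2) ^ 2 := by
      have : (2 * (k : ℝ) * b) ^ 2 = 2 * (k:ℝ) ^ 2 * (Nat.factorial n : ℝ) := by
        rw [mul_pow, mul_pow, hb2]; ring
      rw [this, ← pow_mul]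
      calc 2 * (k:ℝ) ^ 2 * (Nat.factorial n : ℝ)
          = (2 * k ^ 2 * Nat.factorial (2 * k) : ℝ) := by
            rw [hn2]
        _ ≤ F ^ 4 := hkey
    exact le_of_pow_le_pow_left₀ two_ne_zero (by positivity) hsq
  -- alpha bound
  have halpha : (1 + (alpha m : ℝ)) ≤ (m : ℝ) := by exact_mod_cast alpha_le m hm
  -- nat exponent inequality : m * 2^(m-1) * k^2 ≤ 2^m * k^m
  have hnat : (m : ℕ) * 2 ^ (m - 1) * k ^ 2 ≤ 2 ^ m * k ^ m := by
    have hm1 : m ≤ 2 ^ (m - 1) := by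
      have := @Nat.lt_two_pow_self (m - 1); omega
    have hm2 : 2 ^ (m - 1) = 2 * 2 ^ (m - 2) := by
      rw [← pow_succ']; congr 1; omega
    have hm3 : 2 ^ (m - 2) ≤ k ^ (m - 2) := Nat.pow_le_pow_left (by omega) _
    have hmk : m ≤ 2 * k ^ (m - 2) := by
      calc m ≤ 2 ^ (m - 1) := hm1
        _ = 2 * 2 ^ (m - 2) := hm2
        _ ≤ 2 * k ^ (m - 2) := Nat.mul_le_mul_left _ hm3
    calc m * 2 ^ (m - 1) * k ^ 2 ≤ (2 * k ^ (m - 2)) * 2 ^ (m - 1) * k ^ 2 := by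
          exact Nat.mul_le_mul_right _ (Nat.mul_le_mul_right _ hmk)
      _ = (2 * 2 ^ (m - 1)) * (k ^ (m - 2) * k ^ 2) := by ring
      _ = 2 ^ m * k ^ m := by
          rw [← pow_succ', ← pow_add]
          congr 2 <;> omega
  have hnatR : (m : ℝ) * 2 ^ (m - 1) * (k : ℝ) ^ 2 ≤ 2 ^ m * (k : ℝ) ^ m := by
    exact_mod_cast hnat
  -- main chain : m * b^m * (2^(m-1) * k^2) ≤ F^(2m)
  have hmain : (m : ℝ) * b ^ m * (2 ^ (m - 1) * (k : ℝ) ^ 2) ≤ F ^ (2 * m) := by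
    calc (m : ℝ) * b ^ m * (2 ^ (m - 1) * (k : ℝ) ^ 2)
        = ((m : ℝ) * 2 ^ (m - 1) * (k : ℝ) ^ 2) * b ^ m := by ring
      _ ≤ (2 ^ m * (k : ℝ) ^ m) * b ^ m := by
          exact mul_le_mul_of_nonneg_right hnatR (by positivity)
      _ = (2 * (k : ℝ) * b) ^ m := by rw [mul_pow, mul_pow]
      _ ≤ (F ^ 2) ^ m := pow_le_pow_left₀ (by positivity) hkb m
      _ = F ^ (2 * m) := by rw [← pow_mul]
  -- rewrite RHS
  have hG : F = (k : ℝ) * (Nat.factorial (k - 1) : ℝ) := by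
    rw [hFdef]
    exact_mod_cast (Nat.mul_factorial_pred (by omega : k ≠ 0)).symm
  have hk0 : (0 : ℝ) < (k : ℝ) := by exact_mod_cast (by omega : 0 < k)
  have hGval : (Nat.factorial (k - 1) : ℝ) = F / k := by
    rw [hG, mul_comm, mul_div_assoc, div_self (ne_of_gt hk0), mul_one]
  clear_value k b F
  rw [hrw, hGval]
  have hsplit : F ^ (2 * m) = F ^ 2 * F ^ (2 * m - 2) := by
    rw [← pow_add]; congr 1; omega
  have hRHSeq : (1 / (2:ℝ) ^ (m-1)) * (F / (k:ℝ)) ^ 2 * F ^ (2*m-2)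
      = F ^ (2*m) / (2 ^ (m-1) * (k:ℝ) ^ 2) := by
    rw [div_pow, hsplit]; ring
  rw [hRHSeq]
  have h2 : (m:ℝ) * b ^ m ≤ F ^ (2*m) / (2 ^ (m-1) * (k:ℝ) ^ 2) := by
    rw [le_div_iff₀ (by positivity)]; exact hmain
  exact le_trans (mul_le_mul_of_nonneg_right halpha (by positivity)) h2
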